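/- Let d ≥ 1 and t > 0. Define d² matrices L^r(t) ∈ M_d (r indexed by pairs (i,j) via r = i + (j-1)d) where L^{i+(j-1)d}(t) has (i,j)-entry equal to (L(t)_{i,j})^{1/2} and all other entries zero, with L(t)_{i,j} = λ([i-1,i)∩[(j-1)t², jt²)). Then ∑_r L^r(t) L^r(t)* ≤ Id and ∑_r L^r(t)* L^r(t) ≤ t² · Id in the Loewner (positive semidefinite) order. -/

import Mathlib

open MeasureTheory Matrix ComplexOrder ENNReal

noncomputable def Lmat (d : ℕ) (t : ℝ) : Matrix (Fin d) (Fin d) ℝ :=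
  fun i j => (volume (Set.Ico (i : ℝ) ((i : ℝ) + 1) ∩
    Set.Ico ((j : ℝ) * t ^ 2) (((j : ℝ) + 1) * t ^ 2))).toReal

/-- The family `L^r(t)` of `d²` matrices, indexed by pairs `(i,j)`: the matrix
`Lr d t (i,j)` has `(i,j)`-entry `√(L(t)_{i,j})` and all other entries zero. -/
noncomputable def Lr (d : ℕ) (t : ℝ) (p : Fin d × Fin d) : Matrix (Fin d) (Fin d) ℂ :=
  Matrix.single p.1 p.2 ((Real.sqrt (Lmat d t p.1 p.2) : ℝ) : ℂ)

lemma conjTranspose_stdBasisMatrix' {n : Type*} [DecidableEq n] (i j : n) (c : ℂ) :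
    (Matrix.single i j c)ᴴ = Matrix.single j i (star c) := by
  ext a b
  simp only [Matrix.single, Matrix.conjTranspose_apply, Matrix.of_apply]
  by_cases h1 : j = a <;> by_cases h2 : i = b <;> simp [h1, h2]

/-- key measure-theoretic estimate -/
lemma sum_inter_le {ι : Type*} [Fintype ι] (A : Set ℝ) (hA : MeasurableSet A)
    (B : ι → Set ℝ) (hB : ∀ i, MeasurableSet (B i))
    (hd : Pairwise (Function.onFun Disjoint B)) (c : ℝ≥0∞) (hc : c ≠ ⊤)
    (hAc : volume A ≤ c) :
    ∑ i, (volume (A ∩ B i)).toReal ≤ c.toReal := by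
  have hfin : ∀ i, volume (A ∩ B i) ≠ ⊤ := fun i =>
    ((measure_mono Set.inter_subset_left).trans hAc |>.trans_lt hc.lt_top).ne
  rw [← ENNReal.toReal_sum (fun i _ => hfin i)]
  apply ENNReal.toReal_mono hc
  have key : ∑ i, volume (A ∩ B i) = volume (⋃ i ∈ Finset.univ, A ∩ B i) :=
    (measure_biUnion_finset
      (fun i _ j _ hij => ((hd hij).mono Set.inter_subset_right
        Set.inter_subset_right))
      (fun i _ => hA.inter (hB i))).symm
  rw [key]
  refine (measure_mono ?_).trans hAc
  simp

lemma Ico_mul_disjoint (t : ℝ) (ht : 0 ≤ t ^ 2) (d : ℕ) :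
    Pairwise (Function.onFun Disjoint
      (fun j : Fin d => Set.Ico ((j : ℝ) * t ^ 2) (((j : ℝ) + 1) * t ^ 2))) := by
  have key : ∀ j k : Fin d, j < k →
      Disjoint (Set.Ico ((j : ℝ) * t ^ 2) (((j : ℝ) + 1) * t ^ 2))
        (Set.Ico ((k : ℝ) * t ^ 2) (((k : ℝ) + 1) * t ^ 2)) := by
    intro j k h
    rw [Set.Ico_disjoint_Ico]
    have h1 : (j : ℝ) + 1 ≤ (k : ℝ) := by
      have := Nat.succ_le_of_lt (Fin.lt_iff_val_lt_val.mp h)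
      exact_mod_cast this
    calc min (((j : ℝ) + 1) * t ^ 2) (((k : ℝ) + 1) * t ^ 2)
        ≤ ((j : ℝ) + 1) * t ^ 2 := min_le_left _ _
      _ ≤ (k : ℝ) * t ^ 2 := mul_le_mul_of_nonneg_right h1 ht
      _ ≤ max ((j : ℝ) * t ^ 2) ((k : ℝ) * t ^ 2) := le_max_right _ _
  intro j k hjk
  rcases lt_or_gt_of_ne hjk with h | h
  · exact key j k h
  · exact (key k j h).symm

lemma Ico_nat_disjoint (d : ℕ) :
    Pairwise (Function.onFun Disjoint
      (fun i : Fin d => Set.Ico ((i : ℝ)) ((i : ℝ) + 1))) := by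
  have := Ico_mul_disjoint 1 (by norm_num) d
  simpa using this

theorem Lr_sums_loewner_bounds (d : ℕ) (hd : 1 ≤ d) (t : ℝ) (ht : 0 < t) :
    ((1 : Matrix (Fin d) (Fin d) ℂ) - ∑ p : Fin d × Fin d, Lr d t p * (Lr d t p)ᴴ).PosSemidef ∧
    (((t : ℂ) ^ 2 • (1 : Matrix (Fin d) (Fin d) ℂ)) -
        ∑ p : Fin d × Fin d, (Lr d t p)ᴴ * Lr d t p).PosSemidef := by
  have hL : ∀ i j : Fin d, 0 ≤ Lmat d t i j := fun i j => ENNReal.toReal_nonneg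
  have hsq : ∀ p : Fin d × Fin d,
      ((Real.sqrt (Lmat d t p.1 p.2) : ℝ) : ℂ) * star ((Real.sqrt (Lmat d t p.1 p.2) : ℝ) : ℂ)
        = ((Lmat d t p.1 p.2 : ℝ) : ℂ) := by
    intro p
    rw [Complex.star_def, Complex.conj_ofReal, ← Complex.ofReal_mul,
      Real.mul_self_sqrt (hL _ _)]
  -- the two sums are diagonal matrices
  have h1 : ∑ p : Fin d × Fin d, Lr d t p * (Lr d t p)ᴴ =
      Matrix.diagonal (fun i => ((∑ j, Lmat d t i j : ℝ) : ℂ)) := by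
    have e : ∀ p : Fin d × Fin d, Lr d t p * (Lr d t p)ᴴ =
        Matrix.single p.1 p.1 ((Lmat d t p.1 p.2 : ℝ) : ℂ) := by
      intro p
      rw [Lr, conjTranspose_stdBasisMatrix', Matrix.single_mul_single_same, hsq]
    simp_rw [e]
    ext a b
    rw [Matrix.sum_apply, Fintype.sum_prod_type]
    by_cases hab : a = b
    · subst hab
      simp [Matrix.single, Finset.sum_ite_eq, eq_comm]
    · rw [Matrix.diagonal_apply_ne _ hab]
      refine Finset.sum_eq_zero fun x _ => Finset.sum_eq_zero fun y _ => ?_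
      simp only [Matrix.single, Matrix.of_apply]
      rw [if_neg]
      rintro ⟨rfl, rfl⟩; exact hab rfl
  have h2 : ∑ p : Fin d × Fin d, (Lr d t p)ᴴ * Lr d t p =
      Matrix.diagonal (fun j => ((∑ i, Lmat d t i j : ℝ) : ℂ)) := by
    have e : ∀ p : Fin d × Fin d, (Lr d t p)ᴴ * Lr d t p =
        Matrix.single p.2 p.2 ((Lmat d t p.1 p.2 : ℝ) : ℂ) := by
      intro p
      rw [Lr, conjTranspose_stdBasisMatrix', Matrix.single_mul_single_same, mul_comm, hsq]
    simp_rw [e]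
    ext a b
    rw [Matrix.sum_apply, Fintype.sum_prod_type_right]
    by_cases hab : a = b
    · subst hab
      simp [Matrix.single, Finset.sum_ite_eq, eq_comm]
    · rw [Matrix.diagonal_apply_ne _ hab]
      refine Finset.sum_eq_zero fun x _ => Finset.sum_eq_zero fun y _ => ?_
      simp only [Matrix.single, Matrix.of_apply]
      rw [if_neg]
      rintro ⟨rfl, rfl⟩; exact hab rfl
  have ht2 : (0 : ℝ) ≤ t ^ 2 := sq_nonneg t
  constructor
  · rw [h1, ← Matrix.diagonal_one,
      show ((Matrix.diagonal fun _ : Fin d => (1 : ℂ)) -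
          Matrix.diagonal fun i => ((∑ j, Lmat d t i j : ℝ) : ℂ)) =
        Matrix.diagonal fun i => (1 : ℂ) - ((∑ j, Lmat d t i j : ℝ) : ℂ) from
        by rw [← Matrix.diagonal_sub]]
    refine Matrix.posSemidef_diagonal_iff.mpr fun i => ?_
    have hsum : ∑ j, Lmat d t i j ≤ 1 := by
      have := sum_inter_le (Set.Ico (i : ℝ) ((i : ℝ) + 1)) measurableSet_Ico
        (fun j : Fin d => Set.Ico ((j : ℝ) * t ^ 2) (((j : ℝ) + 1) * t ^ 2))
        (fun j => measurableSet_Ico) (Ico_mul_disjoint t ht2 d) 1 one_ne_top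
        (by rw [Real.volume_Ico]; simp)
      simpa [Lmat] using this
    have : ((1 : ℂ)) - ((∑ j, Lmat d t i j : ℝ) : ℂ) = (((1 - ∑ j, Lmat d t i j : ℝ)) : ℂ) := by
      push_cast; ring
    rw [this, Complex.zero_le_real]
    linarith
  · rw [h2]
    have hsm : ((t : ℂ) ^ 2 • (1 : Matrix (Fin d) (Fin d) ℂ)) =
        Matrix.diagonal (fun _ : Fin d => (t : ℂ) ^ 2) := by
      ext a b
      by_cases hab : a = b
      · subst hab
        simp [Matrix.one_apply_eq, Matrix.diagonal_apply_eq]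
      · simp [Matrix.one_apply_ne hab, Matrix.diagonal_apply_ne _ hab]
    rw [hsm,
      show ((Matrix.diagonal fun _ : Fin d => (t : ℂ) ^ 2) -
          Matrix.diagonal fun j => ((∑ i, Lmat d t i j : ℝ) : ℂ)) =
        Matrix.diagonal fun j => (t : ℂ) ^ 2 - ((∑ i, Lmat d t i j : ℝ) : ℂ) from
        by rw [← Matrix.diagonal_sub]]
    refine Matrix.posSemidef_diagonal_iff.mpr fun j => ?_
    have hsum : ∑ i, Lmat d t i j ≤ t ^ 2 := by
      have := sum_inter_le (Set.Ico ((j : ℝ) * t ^ 2) (((j : ℝ) + 1) * t ^ 2)) measurableSet_Ico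
        (fun i : Fin d => Set.Ico ((i : ℝ)) ((i : ℝ) + 1))
        (fun i => measurableSet_Ico) (Ico_nat_disjoint d) (ENNReal.ofReal (t ^ 2))
        ofReal_ne_top
        (by rw [Real.volume_Ico]; apply ENNReal.ofReal_le_ofReal; ring_nf; exact le_rfl)
      rw [ENNReal.toReal_ofReal ht2] at this
      simp_rw [Set.inter_comm] at this
      simpa [Lmat] using this
    have : ((t : ℂ)) ^ 2 - ((∑ i, Lmat d t i j : ℝ) : ℂ) =
        (((t ^ 2 - ∑ i, Lmat d t i j : ℝ)) : ℂ) := by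
      push_cast; ring
    rw [this, Complex.zero_le_real]
    linarith
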